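/- Let t ≥ 3 and let m_i = x_i x_{i+1} ⋯ x_{i+t-1} for 1 ≤ i ≤ t+2 be the minimal generators of the t-connected ideal of the path P_{2t+1}. Then the Scarf complex of this ideal is the boundary of a (t+2)-gon: its faces are exactly the empty set, the singletons, the pairs {m_i, m_{i+1}} for 1 ≤ i ≤ t+1, and the pair {m_1, m_{t+2}}. -/

import Mathlib

/-- A subset `σ` of the minimal generating set `M` (squarefree monomials identified with their
sets of variables, lcm identified with union) is a face of the Scarf complex when its lcm is
unique among subsets of `M` (with `lcm ∅ = 1`). -/
def ScarfFace {α : Type*} [DecidableEq α] (M σ : Finset (Finset α)) : Prop :=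
  σ ⊆ M ∧ ∀ τ ⊆ M, τ.sup id = σ.sup id → τ = σ

namespace ScarfAux

def f (t i : ℕ) : Finset ℕ := Finset.Icc i (i + t - 1)

lemma mem_f {t i x : ℕ} : x ∈ f t i ↔ i ≤ x ∧ x ≤ i + t - 1 := Finset.mem_Icc

lemma self_mem_f {t : ℕ} (ht : 1 ≤ t) (i : ℕ) : i ∈ f t i := by
  rw [mem_f]; omega

lemma f_inj {t : ℕ} (ht : 1 ≤ t) : Function.Injective (f t) := by
  intro i j h
  have h1 : i ∈ f t j := h ▸ self_mem_f ht i
  have h2 : j ∈ f t i := h.symm ▸ self_mem_f ht j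
  rw [mem_f] at h1 h2
  omega

lemma mem_sup_iff {t : ℕ} {S : Finset ℕ} {x : ℕ} :
    x ∈ S.sup (f t) ↔ ∃ i ∈ S, i ≤ x ∧ x ≤ i + t - 1 := by
  rw [Finset.mem_sup]
  simp only [f, Finset.mem_Icc]

lemma sup_image' {t : ℕ} (S : Finset ℕ) : (S.image (f t)).sup id = S.sup (f t) := by
  rw [Finset.sup_image]
  rfl

def Uniq (t : ℕ) (S : Finset ℕ) : Prop :=
  ∀ T ⊆ Finset.Icc 1 (t + 2), T.sup (f t) = S.sup (f t) → T = S

lemma uniq_empty {t : ℕ} (ht : 1 ≤ t) : Uniq t ∅ := by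
  intro T hT h
  rw [Finset.eq_empty_iff_forall_notMem]
  intro i hi
  have hmem : i ∈ T.sup (f t) := mem_sup_iff.2 ⟨i, hi, le_refl i, by omega⟩
  rw [h] at hmem
  simp at hmem

lemma uniq_singleton {t i : ℕ} (ht : 3 ≤ t) (h1 : 1 ≤ i) (h2 : i ≤ t + 2) :
    Uniq t {i} := by
  intro T hT hsup
  rw [Finset.sup_singleton] at hsup
  have hiT : i ∈ T := by
    have hmem : i ∈ T.sup (f t) := by rw [hsup]; exact self_mem_f (by omega) i
    obtain ⟨k, hk, hk1, hk2⟩ := mem_sup_iff.1 hmem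
    have hk3 : k + t - 1 ∈ T.sup (f t) := mem_sup_iff.2 ⟨k, hk, by omega, le_refl _⟩
    have hk4 : k ∈ T.sup (f t) := mem_sup_iff.2 ⟨k, hk, le_refl _, by omega⟩
    rw [hsup, mem_f] at hk3 hk4
    have hki : k = i := by omega
    rwa [hki] at hk
  ext j
  simp only [Finset.mem_singleton]
  constructor
  · intro hj
    have hj1 : j ∈ T.sup (f t) := mem_sup_iff.2 ⟨j, hj, le_refl j, by omega⟩
    have hj2 : j + t - 1 ∈ T.sup (f t) := mem_sup_iff.2 ⟨j, hj, by omega, le_refl _⟩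
    rw [hsup, mem_f] at hj1 hj2
    omega
  · intro hj
    rw [hj]
    exact hiT

lemma sup_pair {t i : ℕ} (ht : 1 ≤ t) :
    ({i, i + 1} : Finset ℕ).sup (f t) = Finset.Icc i (i + t) := by
  ext x
  rw [mem_sup_iff, Finset.mem_Icc]
  simp only [Finset.mem_insert, Finset.mem_singleton]
  constructor
  · rintro ⟨k, (rfl | rfl), hx1, hx2⟩ <;> omega
  · intro h
    by_cases hx : x ≤ i + t - 1
    · exact ⟨i, Or.inl rfl, by omega, hx⟩
    · exact ⟨i + 1, Or.inr rfl, by omega, by omega⟩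

lemma uniq_pair {t i : ℕ} (ht : 3 ≤ t) (h1 : 1 ≤ i) (h2 : i + 1 ≤ t + 2) :
    Uniq t {i, i + 1} := by
  intro T hT hsup
  rw [sup_pair (by omega)] at hsup
  have hmem : ∀ j ∈ T, i ≤ j ∧ j ≤ i + 1 := by
    intro j hj
    have a1 : j ∈ T.sup (f t) := mem_sup_iff.2 ⟨j, hj, le_refl _, by omega⟩
    have a2 : j + t - 1 ∈ T.sup (f t) := mem_sup_iff.2 ⟨j, hj, by omega, le_refl _⟩
    rw [hsup, Finset.mem_Icc] at a1 a2
    omega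
  have hi : i ∈ T := by
    have hx : i ∈ T.sup (f t) := by rw [hsup, Finset.mem_Icc]; omega
    obtain ⟨k, hk, hk1, hk2⟩ := mem_sup_iff.1 hx
    have hb := hmem k hk
    have hki : k = i := by omega
    rwa [hki] at hk
  have hi1 : i + 1 ∈ T := by
    have hx : i + t ∈ T.sup (f t) := by rw [hsup, Finset.mem_Icc]; omega
    obtain ⟨k, hk, hk1, hk2⟩ := mem_sup_iff.1 hx
    have hb := hmem k hk
    have hki : k = i + 1 := by omega
    rwa [hki] at hk
  ext j
  simp only [Finset.mem_insert, Finset.mem_singleton]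
  constructor
  · intro hj; have := hmem j hj; omega
  · rintro (rfl | rfl) <;> assumption

lemma mem_sup_ends {t x : ℕ} (ht : 3 ≤ t) :
    x ∈ ({1, t + 2} : Finset ℕ).sup (f t) ↔
      (1 ≤ x ∧ x ≤ t) ∨ (t + 2 ≤ x ∧ x ≤ 2 * t + 1) := by
  rw [mem_sup_iff]
  simp only [Finset.mem_insert, Finset.mem_singleton]
  constructor
  · rintro ⟨k, (rfl | rfl), hx1, hx2⟩ <;> omega
  · rintro (⟨hx1, hx2⟩ | ⟨hx1, hx2⟩)
    · exact ⟨1, Or.inl rfl, hx1, by omega⟩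
    · exact ⟨t + 2, Or.inr rfl, hx1, by omega⟩

lemma uniq_ends {t : ℕ} (ht : 3 ≤ t) : Uniq t {1, t + 2} := by
  intro T hT hsup
  have hmem : ∀ j ∈ T, j = 1 ∨ j = t + 2 := by
    intro j hj
    have hjb : 1 ≤ j ∧ j ≤ t + 2 := Finset.mem_Icc.1 (hT hj)
    by_contra hc
    push_neg at hc
    have hx : t + 1 ∈ T.sup (f t) := mem_sup_iff.2 ⟨j, hj, by omega, by omega⟩
    rw [hsup, mem_sup_ends ht] at hx
    omega
  have h1 : 1 ∈ T := by
    have hx : (1 : ℕ) ∈ T.sup (f t) := by rw [hsup, mem_sup_ends ht]; omega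
    obtain ⟨k, hk, hk1, hk2⟩ := mem_sup_iff.1 hx
    have hkb := Finset.mem_Icc.1 (hT hk)
    have hki : k = 1 := by omega
    rwa [hki] at hk
  have h2 : t + 2 ∈ T := by
    have hx : 2 * t + 1 ∈ T.sup (f t) := by rw [hsup, mem_sup_ends ht]; omega
    obtain ⟨k, hk, hk1, hk2⟩ := mem_sup_iff.1 hx
    have hkb := Finset.mem_Icc.1 (hT hk)
    have hki : k = t + 2 := by omega
    rwa [hki] at hk
  ext j
  simp only [Finset.mem_insert, Finset.mem_singleton]
  constructor
  · exact hmem j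
  · rintro (rfl | rfl) <;> assumption

lemma not_uniq_of_insert {t d : ℕ} {S : Finset ℕ} (hS : S ⊆ Finset.Icc 1 (t + 2))
    (hd : d ∈ Finset.Icc 1 (t + 2)) (hne : d ∉ S)
    (hsub : f t d ⊆ S.sup (f t)) : ¬ Uniq t S := by
  intro hU
  have hT : insert d S ⊆ Finset.Icc 1 (t + 2) := Finset.insert_subset hd hS
  have hsup : (insert d S).sup (f t) = S.sup (f t) := by
    rw [Finset.sup_insert]
    exact sup_eq_right.mpr hsub
  have heq := hU _ hT hsup
  exact hne (by rw [← heq]; exact Finset.mem_insert_self d S)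

lemma not_uniq_of_erase {t d : ℕ} {S : Finset ℕ} (hS : S ⊆ Finset.Icc 1 (t + 2))
    (hd : d ∈ S) (hsub : f t d ⊆ (S.erase d).sup (f t)) : ¬ Uniq t S := by
  intro hU
  have hT : S.erase d ⊆ Finset.Icc 1 (t + 2) := (Finset.erase_subset d S).trans hS
  have hsup : (S.erase d).sup (f t) = S.sup (f t) := by
    conv_rhs => rw [← Finset.insert_erase hd]
    rw [Finset.sup_insert]
    exact (sup_eq_right.mpr hsub).symm
  have heq := hU _ hT hsup
  rw [← heq] at hd
  exact Finset.notMem_erase d S hd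

lemma not_uniq {t : ℕ} {S : Finset ℕ} (ht : 3 ≤ t) (hS : S ⊆ Finset.Icc 1 (t + 2))
    (h0 : S.Nonempty) (hsing : ∀ i, 1 ≤ i → i ≤ t + 2 → S ≠ {i})
    (hpair : ∀ i, 1 ≤ i → i + 1 ≤ t + 2 → S ≠ {i, i + 1})
    (hends : S ≠ {1, t + 2}) : ¬ Uniq t S := by
  have hbound : ∀ j ∈ S, 1 ≤ j ∧ j ≤ t + 2 := fun j hj => Finset.mem_Icc.1 (hS hj)
  set a := S.min' h0 with ha
  set b := S.max' h0 with hb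
  have haS : a ∈ S := S.min'_mem h0
  have hbS : b ∈ S := S.max'_mem h0
  have ha1 := hbound a haS
  have hb1 := hbound b hbS
  have haleb : ∀ j ∈ S, a ≤ j ∧ j ≤ b := fun j hj => ⟨S.min'_le j hj, S.le_max' j hj⟩
  have hlt : a < b := by
    rcases eq_or_lt_of_le (S.min'_le b hbS) with heq | h
    · exfalso
      apply hsing a ha1.1 ha1.2
      ext j
      simp only [Finset.mem_singleton]
      constructor
      · intro hj; have := haleb j hj; omega
      · rintro rfl; exact haS
    · exact h
  by_cases hbt : b ≤ a + t
  · have hb2 : a + 2 ≤ b := by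
      by_contra hc
      apply hpair a ha1.1 (by omega)
      ext j
      simp only [Finset.mem_insert, Finset.mem_singleton]
      constructor
      · intro hj; have := haleb j hj; omega
      · rintro (rfl | rfl)
        · exact haS
        · have hba : a + 1 = b := by omega
          rw [hba]; exact hbS
    have hsub : f t (a + 1) ⊆ f t a ∪ f t b := by
      intro x hx
      rw [mem_f] at hx
      rw [Finset.mem_union, mem_f, mem_f]
      omega
    by_cases hm : a + 1 ∈ S
    · apply not_uniq_of_erase hS hm
      refine hsub.trans ?_
      intro x hx
      rw [Finset.mem_union] at hx
      rcases hx with hx | hx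
      · exact mem_sup_iff.2 ⟨a, Finset.mem_erase.2 ⟨by omega, haS⟩, mem_f.1 hx⟩
      · exact mem_sup_iff.2 ⟨b, Finset.mem_erase.2 ⟨by omega, hbS⟩, mem_f.1 hx⟩
    · apply not_uniq_of_insert hS (Finset.mem_Icc.2 ⟨by omega, by omega⟩) hm
      refine hsub.trans ?_
      intro x hx
      rw [Finset.mem_union] at hx
      rcases hx with hx | hx
      · exact mem_sup_iff.2 ⟨a, haS, mem_f.1 hx⟩
      · exact mem_sup_iff.2 ⟨b, hbS, mem_f.1 hx⟩
  · have hA : a = 1 ∧ b = t + 2 := by omega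
    have h1S : 1 ∈ S := hA.1 ▸ haS
    have h2S : t + 2 ∈ S := hA.2 ▸ hbS
    obtain ⟨c, hcS, hc2⟩ : ∃ c ∈ S, c ∉ ({1, t + 2} : Finset ℕ) := by
      by_contra hc
      push_neg at hc
      apply hends
      apply Finset.Subset.antisymm hc
      intro j hj
      simp only [Finset.mem_insert, Finset.mem_singleton] at hj
      rcases hj with rfl | rfl
      · exact h1S
      · exact h2S
    simp only [Finset.mem_insert, Finset.mem_singleton] at hc2
    push_neg at hc2
    have hcb := hbound c hcS
    have hfull : ∀ T : Finset ℕ, T ⊆ Finset.Icc 1 (t + 2) → 1 ∈ T → t + 2 ∈ T →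
        (∃ e ∈ T, 2 ≤ e ∧ e ≤ t + 1) → T.sup (f t) = Finset.Icc 1 (2 * t + 1) := by
      rintro T hTsub hT1 hT2 ⟨e, heT, he⟩
      apply Finset.Subset.antisymm
      · intro x hx
        obtain ⟨k, hk, hk1, hk2⟩ := mem_sup_iff.1 hx
        have hkb := Finset.mem_Icc.1 (hTsub hk)
        rw [Finset.mem_Icc]
        omega
      · intro x hx
        rw [Finset.mem_Icc] at hx
        by_cases hxa : x ≤ t
        · exact mem_sup_iff.2 ⟨1, hT1, by omega, by omega⟩
        by_cases hxb : t + 2 ≤ x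
        · exact mem_sup_iff.2 ⟨t + 2, hT2, by omega, by omega⟩
        · exact mem_sup_iff.2 ⟨e, heT, by omega, by omega⟩
    have hsupS := hfull S hS h1S h2S ⟨c, hcS, by omega, by omega⟩
    by_cases hfullS : S = Finset.Icc 1 (t + 2)
    · have h2mem : (2 : ℕ) ∈ S := by rw [hfullS]; exact Finset.mem_Icc.2 ⟨by omega, by omega⟩
      apply not_uniq_of_erase hS h2mem
      have hsupT : (S.erase 2).sup (f t) = Finset.Icc 1 (2 * t + 1) := by
        apply hfull _ ((Finset.erase_subset _ _).trans hS)
        · exact Finset.mem_erase.2 ⟨by omega, h1S⟩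
        · exact Finset.mem_erase.2 ⟨by omega, h2S⟩
        · refine ⟨3, Finset.mem_erase.2 ⟨by omega, ?_⟩, by omega, by omega⟩
          rw [hfullS]; exact Finset.mem_Icc.2 ⟨by omega, by omega⟩
      rw [hsupT]
      intro x hx
      rw [mem_f] at hx
      rw [Finset.mem_Icc]
      omega
    · have hss : S ⊂ Finset.Icc 1 (t + 2) := by
        refine Finset.ssubset_iff_subset_ne.mpr ⟨hS, hfullS⟩
      obtain ⟨d, hdI, hdS⟩ := Finset.exists_of_ssubset hss
      apply not_uniq_of_insert hS hdI hdS
      rw [hsupS]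
      have hdb := Finset.mem_Icc.1 hdI
      intro x hx
      rw [mem_f] at hx
      rw [Finset.mem_Icc]
      omega

lemma uniq_iff {t : ℕ} {S : Finset ℕ} (ht : 3 ≤ t) (hS : S ⊆ Finset.Icc 1 (t + 2)) :
    Uniq t S ↔ (S = ∅ ∨ (∃ i, 1 ≤ i ∧ i ≤ t + 2 ∧ S = {i}) ∨
      (∃ i, 1 ≤ i ∧ i + 1 ≤ t + 2 ∧ S = {i, i + 1}) ∨ S = {1, t + 2}) := by
  constructor
  · intro hU
    by_contra hc
    push_neg at hc
    obtain ⟨h0, h1, h2, h3⟩ := hc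
    exact not_uniq ht hS h0 h1 h2 h3 hU
  · rintro (rfl | ⟨i, hi1, hi2, rfl⟩ | ⟨i, hi1, hi2, rfl⟩ | rfl)
    · exact uniq_empty (by omega)
    · exact uniq_singleton ht hi1 hi2
    · exact uniq_pair ht hi1 hi2
    · exact uniq_ends ht

lemma exists_rep {t : ℕ} (τ : Finset (Finset ℕ))
    (hτ : τ ⊆ (Finset.Icc 1 (t + 2)).image (f t)) :
    ∃ T ⊆ Finset.Icc 1 (t + 2), τ = T.image (f t) := by
  refine ⟨(Finset.Icc 1 (t + 2)).filter (fun i => f t i ∈ τ), Finset.filter_subset _ _, ?_⟩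
  ext m
  simp only [Finset.mem_image, Finset.mem_filter]
  constructor
  · intro hm
    obtain ⟨i, hi, rfl⟩ := Finset.mem_image.1 (hτ hm)
    exact ⟨i, ⟨hi, hm⟩, rfl⟩
  · rintro ⟨i, ⟨hi, hm⟩, rfl⟩
    exact hm

lemma scarf_iff_uniq {t : ℕ} (ht : 3 ≤ t) (S : Finset ℕ)
    (hSsub : S ⊆ Finset.Icc 1 (t + 2)) :
    ScarfFace ((Finset.Icc 1 (t + 2)).image (f t)) (S.image (f t)) ↔ Uniq t S := by
  constructor
  · rintro ⟨_, h⟩ T hT hsup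
    have h1 : (T.image (f t)).sup id = (S.image (f t)).sup id := by
      rw [sup_image', sup_image', hsup]
    have h2 := h (T.image (f t)) (Finset.image_subset_image hT) h1
    exact Finset.image_injective (f_inj (by omega)) h2
  · intro hU
    refine ⟨Finset.image_subset_image hSsub, ?_⟩
    intro τ hτ hsup
    obtain ⟨T, hT, rfl⟩ := exists_rep τ hτ
    rw [sup_image', sup_image'] at hsup
    rw [hU T hT hsup]

end ScarfAux

/-- For `t ≥ 3`, the Scarf complex of the `t`-connected ideal of the path
`P_{2t+1}`, with generators `m_i = x_i ⋯ x_{i+t-1}` for `1 ≤ i ≤ t+2` (identified with the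
intervals `[i, i+t-1]`), is the boundary of a `(t+2)`-gon: its faces are exactly the empty set,
the singletons, the consecutive pairs `{m_i, m_{i+1}}` for `1 ≤ i ≤ t+1`, and the pair
`{m_1, m_{t+2}}`. -/
theorem scarf_connected_ideal_path_2t_plus_one (t : ℕ) (ht : 3 ≤ t)
    (M : Finset (Finset ℕ))
    (hM : M = (Finset.Icc 1 (t + 2)).image (fun i => Finset.Icc i (i + t - 1)))
    (σ : Finset (Finset ℕ)) (hσ : σ ⊆ M) :
    ScarfFace M σ ↔
      (σ = ∅ ∨
        (∃ i, 1 ≤ i ∧ i ≤ t + 2 ∧ σ = {Finset.Icc i (i + t - 1)}) ∨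
        (∃ i, 1 ≤ i ∧ i + 1 ≤ t + 2 ∧
          σ = {Finset.Icc i (i + t - 1), Finset.Icc (i + 1) (i + t)}) ∨
        σ = {Finset.Icc 1 t, Finset.Icc (t + 2) (2 * t + 1)}) := by
  subst hM
  have hM' : (Finset.Icc 1 (t + 2)).image (fun i => Finset.Icc i (i + t - 1))
      = (Finset.Icc 1 (t + 2)).image (ScarfAux.f t) := rfl
  rw [hM'] at hσ ⊢
  obtain ⟨S, hSsub, rfl⟩ := ScarfAux.exists_rep σ hσ
  rw [ScarfAux.scarf_iff_uniq ht S hSsub, ScarfAux.uniq_iff ht hSsub]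
  have himg : Function.Injective (Finset.image (ScarfAux.f t)) :=
    Finset.image_injective (ScarfAux.f_inj (by omega))
  have e1 : ScarfAux.f t 1 = Finset.Icc 1 t := by
    unfold ScarfAux.f; congr 1; omega
  have e2 : ScarfAux.f t (t + 2) = Finset.Icc (t + 2) (2 * t + 1) := by
    unfold ScarfAux.f; congr 1; omega
  have e3 : ∀ i : ℕ, ScarfAux.f t (i + 1) = Finset.Icc (i + 1) (i + t) := by
    intro i; unfold ScarfAux.f; congr 1; omega
  constructor
  · rintro (rfl | ⟨i, h1, h2, rfl⟩ | ⟨i, h1, h2, rfl⟩ | rfl)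
    · left; simp
    · right; left
      exact ⟨i, h1, h2, by rw [Finset.image_singleton]; rfl⟩
    · right; right; left
      refine ⟨i, h1, h2, ?_⟩
      rw [Finset.image_insert, Finset.image_singleton, e3 i]
      rfl
    · right; right; right
      rw [Finset.image_insert, Finset.image_singleton, e1, e2]
  · rintro (h | ⟨i, h1, h2, h3⟩ | ⟨i, h1, h2, h3⟩ | h)
    · left; exact Finset.image_eq_empty.1 h
    · right; left
      refine ⟨i, h1, h2, himg ?_⟩
      rw [Finset.image_singleton]
      exact h3
    · right; right; left
      refine ⟨i, h1, h2, himg ?_⟩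
      rw [Finset.image_insert, Finset.image_singleton, e3 i]
      exact h3
    · right; right; right
      apply himg
      rw [Finset.image_insert, Finset.image_singleton, e1, e2]
      exact h
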